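/- Let p be a prime, q = p^r, and let n, j, a, b be natural numbers with 2 ≤ n ≤ j+1 ≤ q-1, 1 ≤ a < b ≤ n. Then p divides the binomial coefficient C(j+(n-a)(q-1), j+(n-b)(q-1)). -/

import Mathlib

/-- Low base-`p` digits of `p^r * s + x` agree with those of `x`. -/
lemma digit_aux (p r s x i : ℕ) (hp : 0 < p) (hi : i < r) :
    (p ^ r * s + x) / p ^ i % p = x / p ^ i % p := by
  obtain ⟨k, rfl⟩ : ∃ k, r = i + (k + 1) := ⟨r - i - 1, by omega⟩
  have h1 : p ^ (i + (k + 1)) * s = p ^ i * (p * (p ^ k * s)) := by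
    rw [pow_add, pow_succ]; ring
  rw [h1, Nat.mul_add_div (pow_pos hp i), Nat.add_comm,
    Nat.add_mul_mod_self_left]

/-- With `2 ≤ n ≤ j+1 ≤ q-1` and `1 ≤ a < b ≤ n`, the binomial coefficient
`C(j+(n-a)(q-1), j+(n-b)(q-1))` is divisible by `p`. -/
theorem stmt2 (p r q n j a b : ℕ) (hp : p.Prime) (hq : q = p ^ r)
    (hn : 2 ≤ n) (hnj : n ≤ j + 1) (hjq : j + 1 ≤ q - 1)
    (ha : 1 ≤ a) (hab : a < b) (hbn : b ≤ n) :
    p ∣ Nat.choose (j + (n - a) * (q - 1)) (j + (n - b) * (q - 1)) := by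
  haveI : Fact p.Prime := ⟨hp⟩
  have hp1 : 0 < p := hp.pos
  set s := n - a with hs
  set t := n - b with ht
  set c := j + a - n with hc
  set d := j + b - n with hd
  have hq2 : 2 ≤ q := by omega
  have hcq : c < q := by omega
  have hdq : d < q := by omega
  have hcd : c < d := by omega
  have hmulS : s * (q - 1) + s = s * q := by
    rw [← Nat.mul_succ]; congr 1; omega
  have hmulT : t * (q - 1) + t = t * q := by
    rw [← Nat.mul_succ]; congr 1; omega
  have e1 : j + s * (q - 1) = q * s + c := by
    rw [mul_comm q s]
    set A := s * (q - 1)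
    set B := s * q
    omega
  have e2 : j + t * (q - 1) = q * t + d := by
    rw [mul_comm q t]
    set A := t * (q - 1)
    set B := t * q
    omega
  rw [e1, e2]
  set N := q * s + c with hN
  set K := q * t + d with hK
  have hNr : N / p ^ r = s := by
    rw [hN, ← hq, Nat.mul_add_div (by omega), Nat.div_eq_of_lt hcq, Nat.add_zero]
  have hKr : K / p ^ r = t := by
    rw [hK, ← hq, Nat.mul_add_div (by omega), Nat.div_eq_of_lt hdq, Nat.add_zero]
  have h1 := Choose.choose_modEq_choose_mul_prod_range_choose (n := N) (k := K) (p := p) r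
  have h2 := Choose.choose_modEq_prod_range_choose (n := c) (k := d) (p := p) (a := r)
    (by omega) (by omega)
  have hprod : ∀ i ∈ Finset.range r,
      ((Nat.choose (N / p ^ i % p) (K / p ^ i % p) : ℤ))
        = (Nat.choose (c / p ^ i % p) (d / p ^ i % p) : ℤ) := by
    intro i hi
    rw [Finset.mem_range] at hi
    rw [hN, hK, hq, digit_aux p r s c i hp1 hi, digit_aux p r t d i hp1 hi]
  have h3 : (Nat.choose N K : ℤ) ≡
      (Nat.choose s t : ℤ) * (Nat.choose c d : ℤ) [ZMOD p] := by
    calc (Nat.choose N K : ℤ)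
        ≡ (Nat.choose (N / p ^ r) (K / p ^ r) : ℤ) *
            ∏ i ∈ Finset.range r, (Nat.choose (N / p ^ i % p) (K / p ^ i % p) : ℤ) [ZMOD p] := by
          exact_mod_cast h1
      _ = (Nat.choose s t : ℤ) *
            ∏ i ∈ Finset.range r, (Nat.choose (c / p ^ i % p) (d / p ^ i % p) : ℤ) := by
          rw [hNr, hKr, Finset.prod_congr rfl hprod]
      _ ≡ (Nat.choose s t : ℤ) * (Nat.choose c d : ℤ) [ZMOD p] :=
          Int.ModEq.mul_left _ (by exact_mod_cast h2.symm)
  rw [Nat.choose_eq_zero_of_lt hcd] at h3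
  simp only [Nat.cast_zero, mul_zero] at h3
  have := (Int.modEq_zero_iff_dvd).mp h3
  exact_mod_cast this
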